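/- Let Ω ⊆ ℂ^k be an open set containing 0, let Ψ : Ω → ℂ^k and Φ_n : Ω → ℂ^k be holomorphic maps such that Φ_n → Ψ locally uniformly on Ω and the derivative Ψ'(0) is invertible. Then there exist r > 0 and N such that for all n ≥ N the image Φ_n(Ω) contains the open Euclidean ball B(Ψ(0), r). -/

import Mathlib

open Metric Filter Topology

/-- Cauchy estimate: if `g` is holomorphic on an open set containing `closedBall z ρ`
and bounded by `δ` there, then `‖fderiv ℂ g z‖ ≤ δ / ρ`. -/
lemma cauchy_fderiv_bound {E F : Type*} [NormedAddCommGroup E] [NormedSpace ℂ E]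
    [NormedAddCommGroup F] [NormedSpace ℂ F] [CompleteSpace F]
    {g : E → F} {U : Set E} (hU : IsOpen U) (hg : DifferentiableOn ℂ g U)
    {z : E} {ρ δ : ℝ} (hρ : 0 < ρ) (hδ : 0 ≤ δ)
    (hball : closedBall z ρ ⊆ U) (hbound : ∀ w ∈ closedBall z ρ, ‖g w‖ ≤ δ) :
    ‖fderiv ℂ g z‖ ≤ δ / ρ := by
  have hzU : z ∈ U := hball (mem_closedBall_self hρ.le)
  refine ContinuousLinearMap.opNorm_le_bound _ (div_nonneg hδ hρ.le) fun v => ?_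
  rcases eq_or_ne v 0 with rfl | hv
  · simp [div_nonneg hδ hρ.le]
  have hvpos : 0 < ‖v‖ := norm_pos_iff.2 hv
  set R : ℝ := ρ / ‖v‖ with hR
  have hRpos : 0 < R := div_pos hρ hvpos
  set h : ℂ → F := fun t => g (z + t • v) with hh
  have hmem : ∀ t : ℂ, ‖t‖ ≤ R → z + t • v ∈ closedBall z ρ := by
    intro t ht
    rw [mem_closedBall, dist_eq_norm]
    have : ‖z + t • v - z‖ = ‖t‖ * ‖v‖ := by
      rw [add_sub_cancel_left, norm_smul]
    rw [this]
    calc ‖t‖ * ‖v‖ ≤ R * ‖v‖ := by gcongr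
      _ = ρ := div_mul_cancel₀ _ hvpos.ne'
  have hdiff : DifferentiableOn ℂ h (closedBall 0 R) := by
    intro t ht
    have htm : z + t • v ∈ U := hball (hmem t (by simpa [dist_eq_norm] using ht))
    have h1 : DifferentiableAt ℂ g (z + t • v) := hg.differentiableAt (hU.mem_nhds htm)
    have h2 : DifferentiableAt ℂ (fun s : ℂ => z + s • v) t :=
      ((differentiableAt_id).smul_const v).const_add z
    exact (h1.comp t h2).differentiableWithinAt
  have hdc : DiffContOnCl ℂ h (ball 0 R) := by
    have := hdiff
    rw [← closure_ball (0 : ℂ) hRpos.ne'] at this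
    exact this.diffContOnCl
  have hder : HasDerivAt h (fderiv ℂ g z v) 0 := by
    have hg' : HasFDerivAt g (fderiv ℂ g z) z := (hg.differentiableAt (hU.mem_nhds hzU)).hasFDerivAt
    have hline : HasDerivAt (fun t : ℂ => z + t • v) v 0 := by
      simpa using ((hasDerivAt_id (0 : ℂ)).smul_const v).const_add z
    have : HasFDerivAt g (fderiv ℂ g z) ((fun t : ℂ => z + t • v) 0) := by simpa using hg'
    exact this.comp_hasDerivAt 0 hline
  have hb : ∀ t ∈ sphere (0 : ℂ) R, ‖h t‖ ≤ δ := by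
    intro t ht
    rw [mem_sphere_zero_iff_norm] at ht
    exact hbound _ (hmem t ht.le)
  have := Complex.norm_deriv_le_of_forall_mem_sphere_norm_le hRpos hdc hb
  rw [hder.deriv] at this
  calc ‖fderiv ℂ g z v‖ ≤ δ / R := this
    _ = δ / ρ * ‖v‖ := by
      rw [hR]
      field_simp

set_option maxHeartbeats 1000000 in
/-- **Rouché/Hurwitz step in the proof of Landau's theorem.** If holomorphic maps
`Φₙ : Ω → ℂᵏ` converge locally uniformly on the open set `Ω ∋ 0` to `Ψ` with `Ψ'(0)`
invertible, then eventually the images `Φₙ(Ω)` contain a fixed ball centered at `Ψ(0)`. -/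
theorem images_contain_ball_of_locally_uniform_limit (k : ℕ)
    (Ω : Set (EuclideanSpace ℂ (Fin k))) (hΩ : IsOpen Ω)
    (h0 : (0 : EuclideanSpace ℂ (Fin k)) ∈ Ω)
    (Ψ : EuclideanSpace ℂ (Fin k) → EuclideanSpace ℂ (Fin k))
    (Φ : ℕ → EuclideanSpace ℂ (Fin k) → EuclideanSpace ℂ (Fin k))
    (hΨ : DifferentiableOn ℂ Ψ Ω)
    (hΦ : ∀ n, DifferentiableOn ℂ (Φ n) Ω)
    (hconv : TendstoLocallyUniformlyOn Φ Ψ atTop Ω)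
    (hinv : IsUnit (fderiv ℂ Ψ 0)) :
    ∃ r > (0 : ℝ), ∃ N : ℕ, ∀ n ≥ N, ball (Ψ 0) r ⊆ Φ n '' Ω := by
  set A : EuclideanSpace ℂ (Fin k) →L[ℂ] EuclideanSpace ℂ (Fin k) := fderiv ℂ Ψ 0 with hA
  -- A is surjective
  have hsurj : A.range = ⊤ := by
    obtain ⟨u, hu⟩ := hinv
    rw [LinearMap.range_eq_top]
    intro y
    refine ⟨(↑u⁻¹ : EuclideanSpace ℂ (Fin k) →L[ℂ] EuclideanSpace ℂ (Fin k)) y, ?_⟩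
    have h1 : ((↑u : EuclideanSpace ℂ (Fin k) →L[ℂ] EuclideanSpace ℂ (Fin k)) * (↑u⁻¹ : EuclideanSpace ℂ (Fin k) →L[ℂ] EuclideanSpace ℂ (Fin k))) y = y := by
      rw [u.mul_inv]; rfl
    rw [hu] at h1
    exact h1
  set f'symm := A.nonlinearRightInverseOfSurjective hsurj with hf'symm
  have hMpos : 0 < f'symm.nnnorm := A.nonlinearRightInverseOfSurjective_nnnorm_pos hsurj
  set c : NNReal := f'symm.nnnorm⁻¹ / 2 with hc
  have hcpos : 0 < c := by positivity
  set c₁ : NNReal := c / 2 with hc₁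
  have hc₁pos : 0 < c₁ := by positivity
  have hc₁pos' : (0:ℝ) < (c₁ : ℝ) := hc₁pos
  -- radius R with closedBall 0 R ⊆ Ω
  obtain ⟨R, hRpos, hRΩ⟩ : ∃ R > 0, closedBall (0 : EuclideanSpace ℂ (Fin k)) R ⊆ Ω :=
    (Metric.nhds_basis_closedBall.mem_iff.1 (hΩ.mem_nhds h0)).imp fun R h => ⟨h.1, h.2⟩
  -- uniform continuity of Ψ on closedBall 0 R
  have hucont : UniformContinuousOn Ψ (closedBall 0 R) :=
    (isCompact_closedBall 0 R).uniformContinuousOn_of_continuous (hΨ.continuousOn.mono hRΩ)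
  obtain ⟨θ, hθpos, hθ⟩ := Metric.uniformContinuousOn_iff.1 hucont ((c₁ : ℝ) * (R / 2))
    (by positivity)
  set ε : ℝ := min (θ / 2) (R / 4) with hε
  have hεpos : 0 < ε := lt_min (by positivity) (by positivity)
  have hεR : ε ≤ R / 4 := min_le_right _ _
  have hεθ : ε < θ := lt_of_le_of_lt (min_le_left _ _) (by linarith)
  have hεΩ : closedBall (0 : EuclideanSpace ℂ (Fin k)) ε ⊆ Ω :=
    (closedBall_subset_closedBall (by linarith)).trans hRΩ
  -- Claim 1: fderiv Ψ is close to A on closedBall 0 ε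
  have claim1 : ∀ z ∈ closedBall (0 : EuclideanSpace ℂ (Fin k)) ε, ‖fderiv ℂ Ψ z - A‖ ≤ (c₁ : ℝ) := by
    intro z hz
    rw [mem_closedBall, dist_zero_right] at hz
    have hzΩ : z ∈ Ω := hεΩ (by simpa [mem_closedBall, dist_zero_right] using hz)
    set g : EuclideanSpace ℂ (Fin k) → EuclideanSpace ℂ (Fin k) := fun w => Ψ (z + w) - Ψ w with hg
    set U : Set (EuclideanSpace ℂ (Fin k)) := Ω ∩ (fun w => z + w) ⁻¹' Ω with hU
    have hUopen : IsOpen U := hΩ.inter (hΩ.preimage (by continuity))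
    have hgd : DifferentiableOn ℂ g U := by
      intro w hw
      have h1 : DifferentiableAt ℂ (fun w => Ψ (z + w)) w := by
        have := hΨ.differentiableAt (hΩ.mem_nhds hw.2)
        exact this.comp w ((differentiableAt_id).const_add z)
      have h2 : DifferentiableAt ℂ Ψ w := hΨ.differentiableAt (hΩ.mem_nhds hw.1)
      exact (h1.sub h2).differentiableWithinAt
    have hsub : closedBall (0 : EuclideanSpace ℂ (Fin k)) (R / 2) ⊆ U := by
      intro w hw
      rw [mem_closedBall, dist_zero_right] at hw
      constructor
      · exact hRΩ (by rw [mem_closedBall, dist_zero_right]; linarith)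
      · refine hRΩ ?_
        rw [mem_closedBall, dist_zero_right]
        calc ‖z + w‖ ≤ ‖z‖ + ‖w‖ := norm_add_le _ _
          _ ≤ R := by linarith
    have hgbound : ∀ w ∈ closedBall (0 : EuclideanSpace ℂ (Fin k)) (R / 2), ‖g w‖ ≤ (c₁ : ℝ) * (R / 2) := by
      intro w hw
      rw [mem_closedBall, dist_zero_right] at hw
      have hw1 : w ∈ closedBall (0 : EuclideanSpace ℂ (Fin k)) R := by
        rw [mem_closedBall, dist_zero_right]; linarith
      have hw2 : z + w ∈ closedBall (0 : EuclideanSpace ℂ (Fin k)) R := by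
        rw [mem_closedBall, dist_zero_right]
        calc ‖z + w‖ ≤ ‖z‖ + ‖w‖ := norm_add_le _ _
          _ ≤ R := by linarith
      have hd : dist (z + w) w < θ := by
        rw [dist_eq_norm, add_sub_cancel_right]
        exact lt_of_le_of_lt hz hεθ
      have := hθ _ hw2 _ hw1 hd
      rw [dist_eq_norm] at this
      exact this.le
    have hcau := cauchy_fderiv_bound hUopen hgd (by positivity)
      (by positivity : (0:ℝ) ≤ (c₁ : ℝ) * (R / 2)) hsub hgbound
    have hfd : fderiv ℂ g 0 = fderiv ℂ Ψ z - A := by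
      have h1 : HasFDerivAt (fun w => Ψ (z + w)) (fderiv ℂ Ψ z) 0 := by
        have ha : HasFDerivAt Ψ (fderiv ℂ Ψ z) ((fun w : EuclideanSpace ℂ (Fin k) => z + w) 0) := by
          simpa using (hΨ.differentiableAt (hΩ.mem_nhds hzΩ)).hasFDerivAt
        have hb : HasFDerivAt (fun w : EuclideanSpace ℂ (Fin k) => z + w) (ContinuousLinearMap.id ℂ (EuclideanSpace ℂ (Fin k))) 0 := by
          simpa using (hasFDerivAt_id (0 : EuclideanSpace ℂ (Fin k))).const_add z
        exact ha.comp 0 hb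
      have h2 : HasFDerivAt Ψ A 0 :=
        hA ▸ (hΨ.differentiableAt (hΩ.mem_nhds h0)).hasFDerivAt
      exact (h1.sub h2).fderiv
    rw [hfd] at hcau
    calc ‖fderiv ℂ Ψ z - A‖ ≤ (c₁ : ℝ) * (R / 2) / (R / 2) := hcau
      _ = (c₁ : ℝ) := mul_div_cancel_right₀ _ (by positivity)
  -- Claim 2: Ψ approximates A on closedBall 0 ε with constant c₁
  have claim2 : ∀ x ∈ closedBall (0 : EuclideanSpace ℂ (Fin k)) ε, ∀ y ∈ closedBall (0 : EuclideanSpace ℂ (Fin k)) ε,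
      ‖Ψ x - Ψ y - A (x - y)‖ ≤ (c₁ : ℝ) * ‖x - y‖ := by
    intro x hx y hy
    set h : EuclideanSpace ℂ (Fin k) → EuclideanSpace ℂ (Fin k) := fun w => Ψ w - A w with hh
    have hdiff : ∀ w ∈ closedBall (0 : EuclideanSpace ℂ (Fin k)) ε, DifferentiableAt ℂ h w := fun w hw =>
      (hΨ.differentiableAt (hΩ.mem_nhds (hεΩ hw))).sub (A.differentiable.differentiableAt)
    have hbd : ∀ w ∈ closedBall (0 : EuclideanSpace ℂ (Fin k)) ε, ‖fderiv ℂ h w‖ ≤ (c₁ : ℝ) := by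
      intro w hw
      have : fderiv ℂ h w = fderiv ℂ Ψ w - A := by
        have h1 : HasFDerivAt Ψ (fderiv ℂ Ψ w) w :=
          (hΨ.differentiableAt (hΩ.mem_nhds (hεΩ hw))).hasFDerivAt
        exact (h1.sub A.hasFDerivAt).fderiv
      rw [this]
      exact claim1 w hw
    have := (convex_closedBall (0 : EuclideanSpace ℂ (Fin k)) ε).norm_image_sub_le_of_norm_fderiv_le
      hdiff hbd hy hx
    calc ‖Ψ x - Ψ y - A (x - y)‖ = ‖h x - h y‖ := by
          rw [hh]; simp only [map_sub]; abel_nf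
      _ ≤ (c₁ : ℝ) * ‖x - y‖ := this
  -- uniform closeness of Φ n to Ψ on closedBall 0 R
  set δ : ℝ := min ((c₁ : ℝ) * (R / 2)) ((c : ℝ) * ε / 2) with hδ
  have hcpos' : (0:ℝ) < (c : ℝ) := hcpos
  have hδpos : 0 < δ := lt_min (by positivity) (by positivity)
  have htuo : TendstoUniformlyOn Φ Ψ atTop (closedBall 0 R) :=
    (tendstoLocallyUniformlyOn_iff_forall_isCompact hΩ).1 hconv _ hRΩ (isCompact_closedBall 0 R)
  obtain ⟨N, hN⟩ := eventually_atTop.1 (Metric.tendstoUniformlyOn_iff.1 htuo δ hδpos)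
  refine ⟨(c : ℝ) * ε / 2, by positivity, N, fun n hn => ?_⟩
  have hclose : ∀ z ∈ closedBall (0 : EuclideanSpace ℂ (Fin k)) R, ‖Φ n z - Ψ z‖ ≤ δ := by
    intro z hz
    have := hN n hn z hz
    rw [dist_comm, dist_eq_norm] at this
    exact this.le
  -- Φ n - Ψ is c₁-Lipschitz on closedBall 0 ε
  set g : EuclideanSpace ℂ (Fin k) → EuclideanSpace ℂ (Fin k) := fun w => Φ n w - Ψ w with hg
  have hgd : DifferentiableOn ℂ g Ω := (hΦ n).sub hΨ
  have hgfd : ∀ z ∈ closedBall (0 : EuclideanSpace ℂ (Fin k)) ε, ‖fderiv ℂ g z‖ ≤ (c₁ : ℝ) := by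
    intro z hz
    rw [mem_closedBall, dist_zero_right] at hz
    have hsub : closedBall z (R / 2) ⊆ Ω := by
      refine subset_trans ?_ hRΩ
      intro w hw
      rw [mem_closedBall] at hw ⊢
      rw [dist_zero_right]
      have h1 : ‖w‖ - ‖z‖ ≤ ‖w - z‖ := norm_sub_norm_le w z
      have h2 : ‖w - z‖ ≤ R / 2 := by rw [← dist_eq_norm]; exact hw
      linarith
    have hgb : ∀ w ∈ closedBall z (R / 2), ‖g w‖ ≤ δ := by
      intro w hw
      refine hclose w ?_
      rw [mem_closedBall] at hw ⊢
      rw [dist_zero_right]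
      have h1 : ‖w‖ - ‖z‖ ≤ ‖w - z‖ := norm_sub_norm_le w z
      have h2 : ‖w - z‖ ≤ R / 2 := by rw [← dist_eq_norm]; exact hw
      linarith
    have := cauchy_fderiv_bound hΩ hgd (by positivity) hδpos.le hsub hgb
    calc ‖fderiv ℂ g z‖ ≤ δ / (R / 2) := this
      _ ≤ (c₁ : ℝ) * (R / 2) / (R / 2) :=
          (div_le_div_iff_of_pos_right (by positivity)).2 (min_le_left _ _)
      _ = (c₁ : ℝ) := mul_div_cancel_right₀ _ (by positivity)
  have hglip : ∀ x ∈ closedBall (0 : EuclideanSpace ℂ (Fin k)) ε, ∀ y ∈ closedBall (0 : EuclideanSpace ℂ (Fin k)) ε,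
      ‖g x - g y‖ ≤ (c₁ : ℝ) * ‖x - y‖ := by
    intro x hx y hy
    exact (convex_closedBall (0 : EuclideanSpace ℂ (Fin k)) ε).norm_image_sub_le_of_norm_fderiv_le
      (fun w hw => hgd.differentiableAt (hΩ.mem_nhds (hεΩ hw))) hgfd hy hx
  -- Φ n approximates A on closedBall 0 ε with constant c
  have happrox : ApproximatesLinearOn (Φ n) A (closedBall 0 ε) c := by
    intro x hx y hy
    have key : Φ n x - Φ n y - A (x - y) = (g x - g y) + (Ψ x - Ψ y - A (x - y)) := by
      rw [hg]; beta_reduce; abel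
    calc ‖Φ n x - Φ n y - A (x - y)‖
        = ‖(g x - g y) + (Ψ x - Ψ y - A (x - y))‖ := by rw [key]
      _ ≤ ‖g x - g y‖ + ‖Ψ x - Ψ y - A (x - y)‖ := norm_add_le _ _
      _ ≤ (c₁ : ℝ) * ‖x - y‖ + (c₁ : ℝ) * ‖x - y‖ :=
          add_le_add (hglip x hx y hy) (claim2 x hx y hy)
      _ = ((c₁ : ℝ) + (c₁ : ℝ)) * ‖x - y‖ := by ring
      _ = (c : ℝ) * ‖x - y‖ := by
          rw [hc₁]
          push_cast
          ring
  -- surjectivity onto a ball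
  have hsurjon := happrox.surjOn_closedBall_of_nonlinearRightInverse f'symm hεpos.le
    (subset_refl _)
  have hrad : ((f'symm.nnnorm : ℝ)⁻¹ - (c : ℝ)) * ε = (c : ℝ) * ε := by
    have : (c : ℝ) = (f'symm.nnnorm : ℝ)⁻¹ / 2 := by
      rw [hc]
      push_cast [NNReal.coe_inv]
      ring
    rw [this]; ring
  intro y hy
  have hymem : y ∈ closedBall (Φ n 0) (((f'symm.nnnorm : ℝ)⁻¹ - (c : ℝ)) * ε) := by
    rw [mem_closedBall, hrad]
    have h1 : dist y (Ψ 0) < (c : ℝ) * ε / 2 := mem_ball.1 hy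
    have h2 : dist (Ψ 0) (Φ n 0) ≤ δ := by
      rw [dist_eq_norm]
      have := hclose 0 (mem_closedBall_self hRpos.le)
      rwa [← norm_neg, neg_sub] at this
    have h3 : δ ≤ (c : ℝ) * ε / 2 := min_le_right _ _
    calc dist y (Φ n 0) ≤ dist y (Ψ 0) + dist (Ψ 0) (Φ n 0) := dist_triangle _ _ _
      _ ≤ (c : ℝ) * ε / 2 + (c : ℝ) * ε / 2 := by linarith
      _ = (c : ℝ) * ε := by ring
  obtain ⟨x, hxmem, hxy⟩ := hsurjon hymem
  exact ⟨x, hεΩ hxmem, hxy⟩
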